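/- Let R be a commutative von Neumann regular ring. Then the Serre conjecture ring R⟨x⟩, defined as the localization of the polynomial ring R[x] at the multiplicative set of monic polynomials, is also a von Neumann regular ring. -/

import Mathlib

open Polynomial

universe u

/-- The multiplicative set of monic polynomials in `R[x]`. -/
def monicSubmonoid (R : Type*) [CommRing R] : Submonoid (Polynomial R) where
  carrier := {p | p.Monic}
  mul_mem' := fun ha hb => ha.mul hb
  one_mem' := Polynomial.monic_one

/-- Combining quasi-inverses along an idempotent decomposition. -/
lemma vnr_combine {S : Type*} [CommRing S] (E p q B₁ B₂ : S)
    (hp : E * p = p) (hq : E * q = 0)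
    (h1 : p = p * B₁ * p) (h2 : q = q * B₂ * q) :
    p + q = (p + q) * (E * B₁ + (1 - E) * B₂) * (p + q) := by
  linear_combination h1 + h2 - (B₁ * p - B₂ * p - 2 * B₂ * q) * hp -
    (2 * B₁ * p + B₁ * q - B₂ * q) * hq

section Aux

variable {R : Type u} [CommRing R]

local notation "ι" => algebraMap (Polynomial R) (Localization (monicSubmonoid R))

/-- The inductive step: split off the top coefficient. -/
lemma vnr_step (f : Polynomial R) (n : ℕ) (hfn : f.natDegree ≤ n)
    (a b : R) (ha : a = f.coeff n) (hb : a = a * b * a)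
    (H : ∃ c, ι (C (1 - a * b) * f) = ι (C (1 - a * b) * f) * c * ι (C (1 - a * b) * f)) :
    ∃ c, ι f = ι f * c * ι f := by
  obtain ⟨c₂, hc₂⟩ := H
  set v : R := b * a * b with hv
  set e : R := a * b with he
  have hav : a * v = e := by rw [hv, he]; linear_combination (-b) * hb
  have hva : v * a = e := by rw [← hav]; ring
  have hae : a * e = a := by rw [he]; linear_combination -hb
  have hee : e * e = e := by rw [he]; linear_combination (-b) * hb
  have hava : a * v * a = a := by
    rw [hv]; linear_combination (-(1 : R) - a * b) * hb
  -- the monic polynomial `g` with `C a * g = C e * f`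
  set g : Polynomial R := C v * f + C (1 - e) * X ^ n with hg_def
  have hgdeg : g.natDegree ≤ n := by
    refine (natDegree_add_le _ _).trans (max_le ((natDegree_C_mul_le _ _).trans hfn) ?_)
    exact (natDegree_C_mul_le _ _).trans (natDegree_X_pow_le n)
  have hgcoeff : g.coeff n = 1 := by
    rw [hg_def, coeff_add, coeff_C_mul, coeff_C_mul, coeff_X_pow, if_pos rfl, ← ha, hva]
    ring
  have hg : g.Monic := monic_of_natDegree_le_of_coeff_eq_one n hgdeg hgcoeff
  have hag : C a * g = C e * f := by
    have h2 : a * (1 - e) = 0 := by rw [mul_sub, mul_one, hae, sub_self]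
    rw [hg_def, mul_add, ← mul_assoc, ← C_mul, hav, ← mul_assoc, ← C_mul, h2, C_0,
      zero_mul, add_zero]
  -- localization
  have hgL : IsUnit (ι g) := IsLocalization.map_units _ (⟨g, hg⟩ : monicSubmonoid R)
  set w : Localization (monicSubmonoid R) := ↑hgL.unit⁻¹ with hw_def
  have hw : ι g * w = 1 := hgL.mul_val_inv
  set p : Localization (monicSubmonoid R) := ι (C e * f) with hp_def
  set q : Localization (monicSubmonoid R) := ι (C (1 - e) * f) with hq_def
  have hpq : ι f = p + q := by
    rw [hp_def, hq_def, ← map_add]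
    congr 1
    rw [← add_mul, ← C_add]
    norm_num
  have hEp : ι (C e) * p = p := by
    rw [hp_def, ← map_mul, ← mul_assoc, ← C_mul, hee]
  have hEq : ι (C e) * q = 0 := by
    have h0 : e * (1 - e) = 0 := by rw [mul_sub, mul_one, hee, sub_self]
    rw [hq_def, ← map_mul, ← mul_assoc, ← C_mul, h0, C_0, zero_mul, map_zero]
  have hpag : p = ι (C a) * ι g := by rw [hp_def, ← map_mul, hag]
  have hCava : ι (C a) * ι (C v) * ι (C a) = ι (C a) := by
    rw [← map_mul, ← map_mul, ← C_mul, ← C_mul, hava]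
  have hp1 : p = p * (ι (C v) * w) * p := by
    calc p = ι (C a) * ι g := hpag
      _ = (ι (C a) * ι (C v) * ι (C a)) * (ι g * w) * ι g := by rw [hCava, hw]; ring
      _ = (ι (C a) * ι g) * (ι (C v) * w) * (ι (C a) * ι g) := by ring
      _ = p * (ι (C v) * w) * p := by rw [← hpag]
  refine ⟨ι (C e) * (ι (C v) * w) + (1 - ι (C e)) * c₂, ?_⟩
  rw [hpq]
  exact vnr_combine (ι (C e)) p q _ c₂ hEp hEq hp1 hc₂

lemma vnr_main (h : ∀ a : R, ∃ b : R, a = a * b * a) :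
    ∀ (n : ℕ) (f : Polynomial R), f.natDegree ≤ n → ∃ c, ι f = ι f * c * ι f := by
  intro n
  induction n with
  | zero =>
    intro f hf
    set a : R := f.coeff 0 with ha
    obtain ⟨b, hb⟩ := h a
    refine vnr_step f 0 hf a b ha hb ⟨0, ?_⟩
    have hf0 : f = C a := by rw [ha]; exact eq_C_of_natDegree_le_zero hf
    have hz : C (1 - a * b) * f = 0 := by
      rw [hf0, ← C_mul, ← C_0]
      congr 1
      linear_combination hb
    rw [hz, map_zero]; ring
  | succ k ih =>
    intro f hf
    set a : R := f.coeff (k + 1) with ha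
    obtain ⟨b, hb⟩ := h a
    refine vnr_step f (k + 1) hf a b ha hb (ih _ ?_)
    rw [natDegree_le_iff_coeff_eq_zero]
    intro N hN
    rw [coeff_C_mul]
    rcases eq_or_lt_of_le (Nat.succ_le_of_lt hN) with hNe | hNl
    · rw [← hNe, ← ha]
      linear_combination hb
    · rw [coeff_eq_zero_of_natDegree_lt (lt_of_le_of_lt hf hNl), mul_zero]

end Aux

/-- If `R` is a von Neumann regular commutative ring, then the Serre conjecture
ring `R⟨x⟩`, the localization of `R[x]` at the monic polynomials, is also von
Neumann regular. -/
theorem statement13 (R : Type u) [CommRing R] (h : ∀ a : R, ∃ b : R, a = a * b * a) :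
    ∀ a : Localization (monicSubmonoid R), ∃ b, a = a * b * a := by
  intro z
  obtain ⟨⟨f, s⟩, hz⟩ := IsLocalization.mk'_surjective (monicSubmonoid R) z
  obtain ⟨c, hc⟩ := vnr_main h f.natDegree f le_rfl
  set A := algebraMap (Polynomial R) (Localization (monicSubmonoid R)) with hA
  have hu : IsUnit (A (↑s : Polynomial R)) := IsLocalization.map_units _ s
  have hzs : z * A (↑s : Polynomial R) = A f := by
    rw [← hz]; exact IsLocalization.mk'_spec _ f s
  have hzf : z = A f * ↑hu.unit⁻¹ := by
    rw [← hzs, mul_assoc, hu.mul_val_inv, mul_one]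
  have h1 : (↑hu.unit⁻¹ : Localization (monicSubmonoid R)) * A (↑s : Polynomial R) = 1 :=
    hu.val_inv_mul
  refine ⟨c * A (↑s : Polynomial R), ?_⟩
  rw [hzf]
  calc A f * ↑hu.unit⁻¹
      = (A f * c * A f) * ((↑hu.unit⁻¹ * A (↑s : Polynomial R)) * ↑hu.unit⁻¹) := by
        rw [← hc, h1]; ring
    _ = (A f * ↑hu.unit⁻¹) * (c * A (↑s : Polynomial R)) * (A f * ↑hu.unit⁻¹) := by ring
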